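/- Exact doubly-robust (product-of-errors) remainder representation: fix an integer k ≥ 1, adopt the core setup and the candidate-nuisance setup with Y_j integrable, and let Q^{j,k,m} and φ_{j,k} denote the true iterated regression functions and functional. Then E_P[ φ̃ ] − φ_{j,k} = Σ_{m=1}^k E_P[ 1_{B_m} ( ĝ_m^{−1} − g_m^{−1} ) ( Q̄^m − Q̂^m ) ], where φ̃ := Σ_{m=1}^k 1_{B_m} ĝ_m^{−1}(Q̂^{m+1} − Q̂^m) + Q̂^1. In particular each summand vanishes if ĝ_m = g_m a.s. on B_m or Q̂^m = Q̄^m a.s. on B_m. -/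

import Mathlib

set_option maxHeartbeats 2000000
set_option linter.unusedSectionVars false

open MeasureTheory ProbabilityTheory Filter

section Aux
variable {Ω : Type*} [inst : MeasurableSpace Ω] {P : Measure Ω} [IsProbabilityMeasure P]
  {B : Set Ω}

lemma cond_eq_smul (P : Measure Ω) (B : Set Ω) : P[|B] = (P B)⁻¹ • P.restrict B := rfl

lemma cond_integral (hB : P B ≠ 0) (f : Ω → ℝ) :
    ∫ ω in B, f ω ∂P = (P B).toReal * ∫ ω, f ω ∂(P[|B]) := by
  rw [cond_eq_smul, integral_smul_measure, ENNReal.toReal_inv, smul_eq_mul, ← mul_assoc,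
    mul_inv_cancel₀, one_mul]
  exact ENNReal.toReal_ne_zero.2 ⟨hB, measure_ne_top _ _⟩

lemma cond_integrable_iff (hB : P B ≠ 0) (f : Ω → ℝ) :
    Integrable f (P[|B]) ↔ Integrable f (P.restrict B) := by
  rw [cond_eq_smul]
  exact integrable_smul_measure (by simp [measure_ne_top]) (by simp [hB])

lemma ae_cond_of_ae {q : Ω → Prop} (h : ∀ᵐ ω ∂P, q ω) : ∀ᵐ ω ∂(P[|B]), q ω := by
  rw [cond_eq_smul]
  exact Measure.ae_smul_measure (ae_restrict_of_ae h) _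

/-- pull-out/version lemma -/
lemma aux_CE {μ : Measure Ω} [IsProbabilityMeasure μ] {m : MeasurableSpace Ω} (hm : m ≤ inst)
    {f X R : Ω → ℝ} (hf : StronglyMeasurable[m] f) (hX : Integrable X μ)
    (hfX : Integrable (fun ω => f ω * X ω) μ) (hR : R =ᵐ[μ] μ[X|m]) :
    ∫ ω, f ω * X ω ∂μ = ∫ ω, f ω * R ω ∂μ := by
  have h1 : μ[fun ω => f ω * X ω|m] =ᵐ[μ] fun ω => f ω * R ω := by
    have := condExp_mul_of_stronglyMeasurable_left (μ := μ) hf hfX hX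
    filter_upwards [this, hR] with ω h1 h2
    show (μ[f * X|m]) ω = f ω * R ω
    simp only [Pi.mul_apply] at h1
    rw [h1, h2]
  calc ∫ ω, f ω * X ω ∂μ = ∫ ω, (f * X) ω ∂μ := rfl
    _ = ∫ ω, (μ[f * X|m]) ω ∂μ := (integral_condExp hm).symm
    _ = ∫ ω, f ω * R ω ∂μ := integral_congr_ae h1

end Aux

section Aux2
set_option linter.unusedSectionVars false

lemma aux_STEP {Ω : Type*} {m : MeasurableSpace Ω} [inst : MeasurableSpace Ω]
    {μ : Measure Ω} [IsProbabilityMeasure μ] (hm : m ≤ inst)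
    {C : Set Ω} (hC : MeasurableSet C) {f p : Ω → ℝ} (hf : StronglyMeasurable[m] f)
    (hp : p =ᵐ[μ] μ[C.indicator (fun _ => (1 : ℝ))|m])
    (hint : Integrable (C.indicator f) μ) :
    ∫ ω in C, f ω ∂μ = ∫ ω, f ω * p ω ∂μ := by
  have hXi : Integrable (C.indicator fun _ => (1 : ℝ)) μ := (integrable_const 1).indicator hC
  have heq : ∀ ω, f ω * (C.indicator (fun _ => (1 : ℝ)) ω) = C.indicator f ω := by
    intro ω
    by_cases h : ω ∈ C <;> simp [Set.indicator_apply, h]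
  have hfX : Integrable (fun ω => f ω * (C.indicator (fun _ => (1 : ℝ)) ω)) μ := by
    exact hint.congr (Filter.Eventually.of_forall fun ω => (heq ω).symm)
  calc ∫ ω in C, f ω ∂μ = ∫ ω, C.indicator f ω ∂μ := (integral_indicator hC).symm
    _ = ∫ ω, f ω * (C.indicator (fun _ => (1 : ℝ)) ω) ∂μ :=
        integral_congr_ae (Filter.Eventually.of_forall fun ω => (heq ω).symm)
    _ = ∫ ω, f ω * p ω ∂μ := aux_CE hm hf hXi hfX hp

lemma aux_boot {Ω : Type*} {m : MeasurableSpace Ω} [inst : MeasurableSpace Ω]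
    {μ : Measure Ω} [IsProbabilityMeasure μ] (hm : m ≤ inst)
    {C : Set Ω} (hC : MeasurableSet C) {f p : Ω → ℝ} {ε : ℝ} (hε : 0 < ε)
    (hf : Measurable[m] f)
    (hp : p =ᵐ[μ] μ[C.indicator (fun _ => (1 : ℝ))|m])
    (hpε : ∀ᵐ ω ∂μ, ε ≤ p ω)
    (hint : Integrable (C.indicator f) μ) :
    Integrable f μ := by
  set M : ℝ := ∫ ω, |C.indicator f ω| ∂μ with hM
  have hfm : Measurable[inst] f := hf.mono hm le_rfl
  have hpInt : Integrable p μ := integrable_condExp.congr hp.symm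
  have key : ∀ n : ℕ, ∫ ω, min |f ω| (n : ℝ) ∂μ ≤ M / ε := by
    intro n
    set fn : Ω → ℝ := fun ω => min |f ω| (n : ℝ) with hfn
    have habs : Measurable[m] (fun ω => |f ω|) := by
      rw [show (fun ω => |f ω|) = fun ω => ‖f ω‖ from funext fun ω => (Real.norm_eq_abs _).symm]
      exact measurable_norm.comp hf
    have hfnm : Measurable[m] fn := by exact habs.min measurable_const
    have hfnmeas : Measurable[inst] fn := hfnm.mono hm le_rfl
    have hfnnn : ∀ ω, 0 ≤ fn ω := fun ω => le_min (abs_nonneg _) n.cast_nonneg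
    have hfnbd : ∀ ω, ‖fn ω‖ ≤ (n : ℝ) := by
      intro ω; rw [Real.norm_eq_abs, abs_of_nonneg (hfnnn ω)]; exact min_le_right _ _
    have hfnInt : Integrable fn μ := by
      refine (integrable_const (n : ℝ)).mono' hfnmeas.aestronglyMeasurable ?_
      exact Filter.Eventually.of_forall hfnbd
    have hfnsm : StronglyMeasurable[m] fn := stronglyMeasurable_iff_measurable.2 hfnm
    have hstep : ∫ ω in C, fn ω ∂μ = ∫ ω, fn ω * p ω ∂μ :=
      aux_STEP hm hC hfnsm hp (hfnInt.indicator hC)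
    have hfnp : Integrable (fun ω => fn ω * p ω) μ :=
      hpInt.bdd_mul (c := n) hfnmeas.aestronglyMeasurable (Filter.Eventually.of_forall hfnbd)
    have h1 : ε * ∫ ω, fn ω ∂μ ≤ ∫ ω, fn ω * p ω ∂μ := by
      rw [← integral_const_mul]
      refine integral_mono_ae (hfnInt.const_mul ε) hfnp ?_
      filter_upwards [hpε] with ω hω
      calc ε * fn ω = fn ω * ε := mul_comm _ _
        _ ≤ fn ω * p ω := mul_le_mul_of_nonneg_left hω (hfnnn ω)
    have h2 : ∫ ω in C, fn ω ∂μ ≤ M := by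
      rw [← integral_indicator hC]
      refine integral_mono (hfnInt.indicator hC) hint.abs ?_
      intro ω
      by_cases h : ω ∈ C
      · simp only [Set.indicator_of_mem h]
        exact min_le_left _ _
      · simp [Set.indicator_of_notMem h]
    have h3 : ε * ∫ ω, fn ω ∂μ ≤ M := h1.trans (hstep ▸ h2)
    rw [mul_comm] at h3
    exact (le_div_iff₀ hε).2 h3
  have habs' : Measurable[inst] (fun ω => |f ω|) := by
    rw [show (fun ω => |f ω|) = fun ω => ‖f ω‖ from funext fun ω => (Real.norm_eq_abs _).symm]
    exact measurable_norm.comp hfm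
  constructor
  · exact hfm.aestronglyMeasurable
  · rw [hasFiniteIntegral_iff_norm]
    have hle : ∫⁻ ω, ENNReal.ofReal ‖f ω‖ ∂μ ≤ ENNReal.ofReal (M / ε) := by
      have hFat : ∫⁻ ω, ENNReal.ofReal ‖f ω‖ ∂μ ≤
          Filter.atTop.liminf (fun n : ℕ => ∫⁻ ω, ENNReal.ofReal (min |f ω| (n : ℝ)) ∂μ) := by
        have := lintegral_liminf_le
          (μ := μ) (u := Filter.atTop) (f := fun (n : ℕ) ω => ENNReal.ofReal (min |f ω| (n : ℝ)))
          (fun n => (((habs'.min measurable_const)).ennreal_ofReal))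
        refine le_trans (le_of_eq ?_) this
        refine lintegral_congr fun ω => ?_
        have : Filter.Tendsto (fun n : ℕ => ENNReal.ofReal (min |f ω| (n : ℝ))) Filter.atTop
            (nhds (ENNReal.ofReal |f ω|)) := by
          refine tendsto_atTop_of_eventually_const (i₀ := ⌈|f ω|⌉₊) fun n hn => ?_
          congr 1
          exact min_eq_left ((Nat.le_ceil _).trans (Nat.cast_le.2 hn))
        rw [Real.norm_eq_abs, this.liminf_eq]
      refine hFat.trans ?_
      refine liminf_le_of_frequently_le' (Filter.Frequently.of_forall fun n => ?_)
      have hfnInt : Integrable (fun ω => min |f ω| (n : ℝ)) μ := by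
        refine (integrable_const (n : ℝ)).mono'
          ((habs'.min measurable_const)).aestronglyMeasurable ?_
        refine Filter.Eventually.of_forall fun ω => ?_
        rw [Real.norm_eq_abs, abs_of_nonneg (le_min (abs_nonneg _) n.cast_nonneg)]
        exact min_le_right _ _
      rw [← ofReal_integral_eq_lintegral_ofReal hfnInt
        (Filter.Eventually.of_forall fun ω => le_min (abs_nonneg _) n.cast_nonneg)]
      exact ENNReal.ofReal_le_ofReal (key n)
    exact hle.trans_lt ENNReal.ofReal_lt_top

end Aux2

/-- Exact doubly-robust (product-of-errors) remainder representation: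
under the core setup, the true iterated-regression recursion `Q` (with functional
`φ_{j,k} = E_P[Q 1]`), and the candidate-nuisance setup,
`E_P[φ̃] - φ_{j,k} = Σ_{m=1}^k E_P[1_{B m} ((ghat m)⁻¹ - (g m)⁻¹)(Qbar m - Qhat m)]`,
where `φ̃ = Σ_{m=1}^k 1_{B m} (ghat m)⁻¹ (Qhat (m+1) - Qhat m) + Qhat 1`. In particular
each summand vanishes if `ghat m = g m` a.s. on `B m` or `Qhat m = Qbar m` a.s. on `B m`. -/
theorem doubly_robust_remainder
    {Ω : Type*} [inst : MeasurableSpace Ω] (P : Measure Ω) [IsProbabilityMeasure P]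
    (k : ℕ) (hk : 1 ≤ k)
    (B : ℕ → Set Ω)
    (hBmeas : ∀ m, m ≤ k → MeasurableSet (B m))
    (hBmono : ∀ m, m < k → B (m + 1) ⊆ B m)
    (hB0 : P (B 0) = 1)
    (hBk : 0 < P (B k))
    (𝒲 : ℕ → MeasurableSpace Ω)
    (h𝒲le : ∀ m, 1 ≤ m → m ≤ k → 𝒲 m ≤ inst)
    (h𝒲mono : ∀ m, 1 ≤ m → m < k → 𝒲 m ≤ 𝒲 (m + 1))
    (ε : ℝ) (hε : 0 < ε)
    (p : ℕ → Ω → ℝ)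
    (hpmeas : ∀ m, 1 ≤ m → m ≤ k → Measurable[𝒲 m] (p m))
    (hpver : ∀ m, 1 ≤ m → m ≤ k →
      p m =ᵐ[P[|B (m - 1)]] (P[|B (m - 1)])[(B m).indicator (fun _ => (1 : ℝ))|𝒲 m])
    (hppos : ∀ m, 1 ≤ m → m ≤ k → ∀ᵐ ω ∂P, ε ≤ p m ω)
    (g : ℕ → Ω → ℝ)
    (hg : ∀ m ω, g m ω = ∏ s ∈ Finset.Icc 1 m, p s ω)
    (Y : Ω → ℝ) (hYint : Integrable Y P)
    (Q : ℕ → Ω → ℝ)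
    (hQtop : Q (k + 1) = Y)
    (hQmeas : ∀ m, 1 ≤ m → m ≤ k → Measurable[𝒲 m] (Q m))
    (hQver : ∀ m, 1 ≤ m → m ≤ k → Q m =ᵐ[P[|B m]] (P[|B m])[Q (m + 1)|𝒲 m])
    (phat : ℕ → Ω → ℝ)
    (hphatmeas : ∀ m, 1 ≤ m → m ≤ k → Measurable[𝒲 m] (phat m))
    (hphatbd : ∀ m, 1 ≤ m → m ≤ k → ∀ᵐ ω ∂P, ε ≤ phat m ω ∧ phat m ω ≤ 1)
    (ghat : ℕ → Ω → ℝ)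
    (hghat : ∀ m ω, ghat m ω = ∏ s ∈ Finset.Icc 1 m, phat s ω)
    (Qhat : ℕ → Ω → ℝ)
    (hQhattop : Qhat (k + 1) = Y)
    (hQhatmeas : ∀ m, 1 ≤ m → m ≤ k → Measurable[𝒲 m] (Qhat m))
    (hQhatbd : ∀ m, 1 ≤ m → m ≤ k → ∃ C, ∀ ω, |Qhat m ω| ≤ C)
    (Qbar : ℕ → Ω → ℝ)
    (hQbarmeas : ∀ m, 1 ≤ m → m ≤ k → Measurable[𝒲 m] (Qbar m))
    (hQbarver : ∀ m, 1 ≤ m → m ≤ k → Qbar m =ᵐ[P[|B m]] (P[|B m])[Qhat (m + 1)|𝒲 m])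
    :
    ((∫ ω, ((∑ m ∈ Finset.Icc 1 k,
        (B m).indicator (fun ω' => (ghat m ω')⁻¹ * (Qhat (m + 1) ω' - Qhat m ω')) ω)
      + Qhat 1 ω) ∂P) - (∫ ω, Q 1 ω ∂P)
    = ∑ m ∈ Finset.Icc 1 k,
        ∫ ω in B m, ((ghat m ω)⁻¹ - (g m ω)⁻¹) * (Qbar m ω - Qhat m ω) ∂P)
    ∧ ∀ m, 1 ≤ m → m ≤ k →
        ((∀ᵐ ω ∂P, ω ∈ B m → ghat m ω = g m ω)
          ∨ (∀ᵐ ω ∂P, ω ∈ B m → Qhat m ω = Qbar m ω)) →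
        ∫ ω in B m, ((ghat m ω)⁻¹ - (g m ω)⁻¹) * (Qbar m ω - Qhat m ω) ∂P = 0 := by
  have part2 : ∀ m, 1 ≤ m → m ≤ k →
      ((∀ᵐ ω ∂P, ω ∈ B m → ghat m ω = g m ω)
        ∨ (∀ᵐ ω ∂P, ω ∈ B m → Qhat m ω = Qbar m ω)) →
      ∫ ω in B m, ((ghat m ω)⁻¹ - (g m ω)⁻¹) * (Qbar m ω - Qhat m ω) ∂P = 0 := by
    intro m _ h2 hyp
    refine integral_eq_zero_of_ae ((ae_restrict_iff' (hBmeas m h2)).2 ?_)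
    rcases hyp with h | h
    · filter_upwards [h] with ω hω hmem
      simp [hω hmem]
    · filter_upwards [h] with ω hω hmem
      simp [hω hmem]
  refine ⟨?_, part2⟩
  -- ## Setup
  have hBsub : ∀ a b, a ≤ b → b ≤ k → B b ⊆ B a := by
    intro a b hab hbk
    induction b with
    | zero =>
      have : a = 0 := by omega
      subst this; exact subset_rfl
    | succ n ih =>
      rcases Nat.eq_or_lt_of_le hab with h | h
      · subst h; exact subset_rfl
      · exact (hBmono n (by omega)).trans (ih (by omega) (by omega))
  have hBpos : ∀ m, m ≤ k → P (B m) ≠ 0 :=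
    fun m hm => (lt_of_lt_of_le hBk (measure_mono (hBsub m k hm le_rfl))).ne'
  have hprob : ∀ j, j ≤ k → IsProbabilityMeasure (P[|B j]) :=
    fun j hj => cond_isProbabilityMeasure (hBpos j hj)
  have hPB0ae : ∀ᵐ ω ∂P, ω ∈ B 0 := by
    have h0 : P (B 0)ᶜ = 0 := (prob_compl_eq_zero_iff (hBmeas 0 (by omega))).2 hB0
    exact ae_iff.2 h0
  have hrestr0 : P.restrict (B 0) = P := Measure.restrict_eq_self_of_ae_mem hPB0ae
  have h𝒲mono' : ∀ s m, 1 ≤ s → s ≤ m → m ≤ k → 𝒲 s ≤ 𝒲 m := by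
    intro s m hs hsm hmk
    induction m with
    | zero => exact absurd (hs.trans hsm) (by omega)
    | succ n ih =>
      by_cases hs' : s = n + 1
      · subst hs'; exact le_rfl
      · exact (ih (by omega) (by omega)).trans (h𝒲mono n (by omega) (by omega))
  have hgmeas : ∀ m, 1 ≤ m → m ≤ k → Measurable[𝒲 m] (g m) := by
    intro m h1 h2
    have e : g m = fun ω => ∏ s ∈ Finset.Icc 1 m, p s ω := funext fun ω => hg m ω
    rw [e]
    refine Finset.measurable_prod _ fun i hi => ?_
    obtain ⟨hi1, hi2⟩ := Finset.mem_Icc.1 hi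
    exact (hpmeas i hi1 (hi2.trans h2)).mono (h𝒲mono' i m hi1 hi2 h2) le_rfl
  have hghatmeas : ∀ m, 1 ≤ m → m ≤ k → Measurable[𝒲 m] (ghat m) := by
    intro m h1 h2
    have e : ghat m = fun ω => ∏ s ∈ Finset.Icc 1 m, phat s ω := funext fun ω => hghat m ω
    rw [e]
    refine Finset.measurable_prod _ fun i hi => ?_
    obtain ⟨hi1, hi2⟩ := Finset.mem_Icc.1 hi
    exact (hphatmeas i hi1 (hi2.trans h2)).mono (h𝒲mono' i m hi1 hi2 h2) le_rfl
  have hpae : ∀ᵐ ω ∂P, ∀ s, 1 ≤ s → s ≤ k → ε ≤ p s ω ∧ ε ≤ phat s ω := by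
    rw [ae_all_iff]
    intro s
    by_cases hcase : 1 ≤ s ∧ s ≤ k
    · filter_upwards [hppos s hcase.1 hcase.2, hphatbd s hcase.1 hcase.2] with ω h1 h2 _ _
      exact ⟨h1, h2.1⟩
    · filter_upwards with ω h1 h2
      exact absurd ⟨h1, h2⟩ hcase
  have hGae : ∀ᵐ ω ∂P,
      (∀ j, j ≤ k → 0 < g j ω ∧ (g j ω)⁻¹ ≤ (ε ^ j)⁻¹
        ∧ 0 < ghat j ω ∧ (ghat j ω)⁻¹ ≤ (ε ^ j)⁻¹)
      ∧ (∀ j, 1 ≤ j → j ≤ k → (g j ω)⁻¹ * p j ω = (g (j - 1) ω)⁻¹) := by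
    filter_upwards [hpae] with ω Hω
    have hprodlb : ∀ q : ℕ → Ω → ℝ, (∀ s, 1 ≤ s → s ≤ k → ε ≤ q s ω) →
        ∀ j, j ≤ k → ε ^ j ≤ ∏ s ∈ Finset.Icc 1 j, q s ω := by
      intro q hq j hj
      have hc : (Finset.Icc 1 j).card = j := by rw [Nat.card_Icc]; omega
      calc ε ^ j = ∏ _s ∈ Finset.Icc 1 j, ε := by rw [Finset.prod_const, hc]
        _ ≤ ∏ s ∈ Finset.Icc 1 j, q s ω := by
            refine Finset.prod_le_prod (fun i _ => hε.le) fun i hi => ?_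
            obtain ⟨hi1, hi2⟩ := Finset.mem_Icc.1 hi
            exact hq i hi1 (hi2.trans hj)
    have hgj : ∀ j, j ≤ k → ε ^ j ≤ g j ω := fun j hj =>
      (hg j ω) ▸ hprodlb p (fun s a b => (Hω s a b).1) j hj
    have hghj : ∀ j, j ≤ k → ε ^ j ≤ ghat j ω := fun j hj =>
      (hghat j ω) ▸ hprodlb phat (fun s a b => (Hω s a b).2) j hj
    constructor
    · intro j hj
      exact ⟨lt_of_lt_of_le (pow_pos hε j) (hgj j hj),
        inv_anti₀ (pow_pos hε j) (hgj j hj),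
        lt_of_lt_of_le (pow_pos hε j) (hghj j hj),
        inv_anti₀ (pow_pos hε j) (hghj j hj)⟩
    · intro j h1 h2
      have hsplit : g j ω = g (j - 1) ω * p j ω := by
        have hj' : j - 1 + 1 = j := by omega
        rw [hg j ω, hg (j - 1) ω, ← hj', Finset.prod_Icc_succ_top (by omega)]
        simp
      have hp0 : 0 < p j ω := lt_of_lt_of_le hε (Hω j h1 h2).1
      rw [hsplit, mul_inv, mul_assoc, inv_mul_cancel₀ hp0.ne', mul_one]
  have hPtoCond : ∀ j, j ≤ k → ∀ X : Ω → ℝ, Integrable X P → Integrable X (P[|B j]) :=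
    fun j hj X hX => (cond_integrable_iff (hBpos j hj) X).2 hX.integrableOn
  have hCondRestr : ∀ j, j ≤ k → ∀ X : Ω → ℝ,
      Integrable X (P[|B j]) ↔ Integrable X (P.restrict (B j)) :=
    fun j hj X => cond_integrable_iff (hBpos j hj) X
  have hNest : ∀ j m, j ≤ m → m ≤ k → ∀ X : Ω → ℝ,
      Integrable X (P[|B m]) ↔ Integrable ((B m).indicator X) (P[|B j]) := by
    intro j m hjm hmk X
    rw [hCondRestr m hmk X, hCondRestr j (hjm.trans hmk) _,
      integrable_indicator_iff (hBmeas m hmk)]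
    unfold IntegrableOn
    rw [Measure.restrict_restrict (hBmeas m hmk),
      Set.inter_eq_self_of_subset_left (hBsub j m hjm hmk)]
  have hscale : ∀ j, j ≤ k → ∀ X : Ω → ℝ,
      ∫ ω in B j, X ω ∂P = (P (B j)).toReal * ∫ ω, X ω ∂(P[|B j]) :=
    fun j hj X => cond_integral (hBpos j hj) X
  have hPBne : ∀ j, j ≤ k → (P (B j)).toReal ≠ 0 :=
    fun j hj => ENNReal.toReal_ne_zero.2 ⟨hBpos j hj, measure_ne_top _ _⟩
  have hscale' : ∀ j m, j ≤ m → m ≤ k → ∀ X : Ω → ℝ,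
      ∫ ω in B m, X ω ∂P = (P (B j)).toReal * ∫ ω in B m, X ω ∂(P[|B j]) := by
    intro j m hjm hmk X
    have e1 : ∫ ω in B m, X ω ∂(P[|B j]) = (P (B j)).toReal⁻¹ * ∫ ω in B m, X ω ∂P := by
      rw [cond_eq_smul]
      rw [show ((P (B j))⁻¹ • P.restrict (B j)).restrict (B m)
          = (P (B j))⁻¹ • (P.restrict (B j)).restrict (B m) from
        Measure.restrict_smul _ _ _]
      rw [integral_smul_measure, Measure.restrict_restrict (hBmeas m hmk),
        Set.inter_eq_self_of_subset_left (hBsub j m hjm hmk), ENNReal.toReal_inv, smul_eq_mul]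
    rw [e1, ← mul_assoc, mul_inv_cancel₀ (hPBne j (hjm.trans hmk)), one_mul]
  -- conditional-expectation swap under set integrals
  have hCEswap : ∀ m, 1 ≤ m → m ≤ k → ∀ f X R : Ω → ℝ, StronglyMeasurable[𝒲 m] f →
      Integrable X (P[|B m]) → Integrable (fun ω => f ω * X ω) (P[|B m]) →
      R =ᵐ[P[|B m]] (P[|B m])[X|𝒲 m] →
      ∫ ω in B m, f ω * X ω ∂P = ∫ ω in B m, f ω * R ω ∂P := by
    intro m h1 h2 f X R hf hX hfX hR
    haveI := hprob m h2
    rw [hscale m h2, hscale m h2, aux_CE (h𝒲le m h1 h2) hf hX hfX hR]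
  -- integrability of weighted functions
  have hIntMul : ∀ j, 1 ≤ j → j ≤ k → ∀ X : Ω → ℝ, Integrable X (P[|B j]) →
      Integrable (fun ω => (g j ω)⁻¹ * X ω) (P[|B j]) ∧
      Integrable (fun ω => (ghat j ω)⁻¹ * X ω) (P[|B j]) := by
    intro j h1 h2 X hX
    haveI := hprob j h2
    have hae := ae_cond_of_ae (B := B j) hGae
    have hdom : Integrable (fun ω => (ε ^ j)⁻¹ * |X ω|) (P[|B j]) := hX.abs.const_mul _
    constructor
    · refine hdom.mono'
        (((hgmeas j h1 h2).mono (h𝒲le j h1 h2) le_rfl).inv.aestronglyMeasurable.mul hX.1) ?_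
      filter_upwards [hae] with ω hω
      have h := hω.1 j h2
      rw [Real.norm_eq_abs, abs_mul, abs_inv, abs_of_pos h.1]
      exact mul_le_mul_of_nonneg_right h.2.1 (abs_nonneg _)
    · refine hdom.mono'
        (((hghatmeas j h1 h2).mono (h𝒲le j h1 h2) le_rfl).inv.aestronglyMeasurable.mul hX.1) ?_
      filter_upwards [hae] with ω hω
      have h := hω.1 j h2
      rw [Real.norm_eq_abs, abs_mul, abs_inv, abs_of_pos h.2.2.1]
      exact mul_le_mul_of_nonneg_right h.2.2.2 (abs_nonneg _)
  -- one-step reduction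
  have hstepP : ∀ m, 1 ≤ m → m ≤ k → ∀ X : Ω → ℝ, Measurable[𝒲 m] X →
      Integrable X (P[|B m]) →
      Integrable X (P[|B (m - 1)]) ∧
      ∫ ω in B m, (g m ω)⁻¹ * X ω ∂P = ∫ ω in B (m - 1), (g (m - 1) ω)⁻¹ * X ω ∂P := by
    intro m h1 h2 X hXm hXint
    haveI := hprob (m - 1) (by omega)
    haveI := hprob m h2
    have hboot : Integrable X (P[|B (m - 1)]) :=
      aux_boot (h𝒲le m h1 h2) (hBmeas m h2) hε hXm (hpver m h1 h2)
        (ae_cond_of_ae (hppos m h1 h2)) ((hNest (m - 1) m (by omega) h2 X).1 hXint)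
    refine ⟨hboot, ?_⟩
    have hfm : Measurable[𝒲 m] (fun ω => (g m ω)⁻¹ * X ω) := by
      exact (hgmeas m h1 h2).inv.mul hXm
    have hfint : Integrable (fun ω => (g m ω)⁻¹ * X ω) (P[|B m]) := (hIntMul m h1 h2 X hXint).1
    have hstep := aux_STEP (μ := P[|B (m - 1)]) (h𝒲le m h1 h2) (hBmeas m h2)
      (stronglyMeasurable_iff_measurable.2 hfm) (hpver m h1 h2)
      ((hNest (m - 1) m (by omega) h2 _).1 hfint)
    have hcongr : ∫ ω, (g m ω)⁻¹ * X ω * p m ω ∂(P[|B (m - 1)])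
        = ∫ ω, (g (m - 1) ω)⁻¹ * X ω ∂(P[|B (m - 1)]) := by
      refine integral_congr_ae ?_
      filter_upwards [ae_cond_of_ae (B := B (m - 1)) hGae] with ω hω
      have halg := hω.2 m h1 h2
      calc (g m ω)⁻¹ * X ω * p m ω = (g m ω)⁻¹ * p m ω * X ω := by ring
        _ = (g (m - 1) ω)⁻¹ * X ω := by rw [halg]
    rw [hscale' (m - 1) m (by omega) h2, hstep, hcongr, ← hscale (m - 1) (by omega)]
  -- true chain
  have chain : ∀ d m, m + d = k → Integrable (Q (m + 1)) (P[|B m]) ∧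
      ∫ ω in B m, (g m ω)⁻¹ * Q (m + 1) ω ∂P = ∫ ω in B k, (g k ω)⁻¹ * Y ω ∂P := by
    intro d
    induction d with
    | zero =>
      intro m hm
      have hmk : m = k := by omega
      subst hmk
      rw [hQtop]
      exact ⟨hPtoCond m le_rfl Y hYint, rfl⟩
    | succ d ih =>
      intro m hm
      have h1k : m + 1 ≤ k := by omega
      obtain ⟨ihInt, ihVal⟩ := ih (m + 1) (by omega)
      haveI := hprob (m + 1) h1k
      have hQint1 : Integrable (Q (m + 1)) (P[|B (m + 1)]) :=
        integrable_condExp.congr (hQver (m + 1) (by omega) h1k).symm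
      have hswap : ∫ ω in B (m + 1), (g (m + 1) ω)⁻¹ * Q (m + 2) ω ∂P
          = ∫ ω in B (m + 1), (g (m + 1) ω)⁻¹ * Q (m + 1) ω ∂P := by
        refine hCEswap (m + 1) (by omega) h1k _ _ _
          (stronglyMeasurable_iff_measurable.2 (by exact (hgmeas (m + 1) (by omega) h1k).inv))
          ihInt (hIntMul (m + 1) (by omega) h1k _ ihInt).1 (hQver (m + 1) (by omega) h1k)
      have hstep := hstepP (m + 1) (by omega) h1k (Q (m + 1)) (hQmeas (m + 1) (by omega) h1k)
        hQint1
      have hred : m + 1 - 1 = m := by omega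
      rw [hred] at hstep
      refine ⟨hstep.1, ?_⟩
      calc ∫ ω in B m, (g m ω)⁻¹ * Q (m + 1) ω ∂P
          = ∫ ω in B (m + 1), (g (m + 1) ω)⁻¹ * Q (m + 1) ω ∂P := hstep.2.symm
        _ = ∫ ω in B (m + 1), (g (m + 1) ω)⁻¹ * Q (m + 2) ω ∂P := hswap.symm
        _ = ∫ ω in B k, (g k ω)⁻¹ * Y ω ∂P := ihVal
  have hg0 : ∀ ω, (g 0 ω)⁻¹ = 1 := by
    intro ω
    rw [hg 0 ω, show Finset.Icc 1 0 = ∅ from Finset.Icc_eq_empty (by omega), Finset.prod_empty]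
    exact inv_one
  have hQ1V : ∫ ω, Q 1 ω ∂P = ∫ ω in B k, (g k ω)⁻¹ * Y ω ∂P := by
    obtain ⟨_, hval⟩ := chain k 0 (by omega)
    have e : ∫ ω in B 0, (g 0 ω)⁻¹ * Q 1 ω ∂P = ∫ ω in B 0, Q 1 ω ∂P :=
      integral_congr_ae (Filter.Eventually.of_forall fun ω => by
        show (g 0 ω)⁻¹ * _ = _
        rw [hg0 ω, one_mul])
    have e2 : (∫ ω in B 0, Q 1 ω ∂P) = ∫ ω, Q 1 ω ∂P := by rw [hrestr0]
    rw [← e2, ← e]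
    exact hval
  -- hat side
  have hQhatIntP : ∀ m, 1 ≤ m → m ≤ k + 1 → Integrable (Qhat m) P := by
    intro m h1 h2
    rcases Nat.lt_or_ge m (k + 1) with h | h
    · have h2' : m ≤ k := by omega
      obtain ⟨C, hC⟩ := hQhatbd m h1 h2'
      refine (integrable_const C).mono'
        ((hQhatmeas m h1 h2').mono (h𝒲le m h1 h2') le_rfl).aestronglyMeasurable ?_
      exact Filter.Eventually.of_forall fun ω => by rw [Real.norm_eq_abs]; exact hC ω
    · have hm : m = k + 1 := by omega
      subst hm; rw [hQhattop]; exact hYint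
  have hQbarInt : ∀ m, 1 ≤ m → m ≤ k → Integrable (Qbar m) (P[|B m]) := by
    intro m h1 h2
    haveI := hprob m h2
    exact integrable_condExp.congr (hQbarver m h1 h2).symm
  set A : ℕ → ℝ := fun j => ∫ ω in B j, (g j ω)⁻¹ * Qhat (j + 1) ω ∂P with hAdef
  have hAk : A k = ∫ ω in B k, (g k ω)⁻¹ * Y ω ∂P := by
    simp only [hAdef]; rw [hQhattop]
  have hA0 : A 0 = ∫ ω, Qhat 1 ω ∂P := by
    simp only [hAdef]
    have e : ∫ ω in B 0, (g 0 ω)⁻¹ * Qhat 1 ω ∂P = ∫ ω in B 0, Qhat 1 ω ∂P :=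
      integral_congr_ae (Filter.Eventually.of_forall fun ω => by
        show (g 0 ω)⁻¹ * _ = _
        rw [hg0 ω, one_mul])
    rw [e]
    rw [hrestr0]
  -- per-level identity
  have hDeq : ∀ m, 1 ≤ m → m ≤ k →
      ∫ ω in B m, (ghat m ω)⁻¹ * (Qhat (m + 1) ω - Qhat m ω) ∂P
      = (∫ ω in B m, ((ghat m ω)⁻¹ - (g m ω)⁻¹) * (Qbar m ω - Qhat m ω) ∂P)
        + (A m - A (m - 1)) := by
    intro m h1 h2
    haveI := hprob m h2
    have hQhm1 : Integrable (Qhat (m + 1)) (P[|B m]) :=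
      hPtoCond m h2 _ (hQhatIntP (m + 1) (by omega) (by omega))
    have hQhm : Integrable (Qhat m) (P[|B m]) := hPtoCond m h2 _ (hQhatIntP m h1 (by omega))
    have hQbm := hQbarInt m h1 h2
    have hsm_g : StronglyMeasurable[𝒲 m] (fun ω => (g m ω)⁻¹) :=
      stronglyMeasurable_iff_measurable.2 (by exact (hgmeas m h1 h2).inv)
    have hsm_gh : StronglyMeasurable[𝒲 m] (fun ω => (ghat m ω)⁻¹) :=
      stronglyMeasurable_iff_measurable.2 (by exact (hghatmeas m h1 h2).inv)
    have hswap1 : ∫ ω in B m, (ghat m ω)⁻¹ * Qhat (m + 1) ω ∂P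
        = ∫ ω in B m, (ghat m ω)⁻¹ * Qbar m ω ∂P :=
      hCEswap m h1 h2 _ _ _ hsm_gh hQhm1 (hIntMul m h1 h2 _ hQhm1).2 (hQbarver m h1 h2)
    have hswap2 : ∫ ω in B m, (g m ω)⁻¹ * Qhat (m + 1) ω ∂P
        = ∫ ω in B m, (g m ω)⁻¹ * Qbar m ω ∂P :=
      hCEswap m h1 h2 _ _ _ hsm_g hQhm1 (hIntMul m h1 h2 _ hQhm1).1 (hQbarver m h1 h2)
    have hstep := hstepP m h1 h2 (Qhat m) (hQhatmeas m h1 h2) hQhm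
    have hAm1 : A (m - 1) = ∫ ω in B (m - 1), (g (m - 1) ω)⁻¹ * Qhat m ω ∂P := by
      simp only [hAdef]
      rw [show m - 1 + 1 = m from by omega]
    have toR : ∀ X : Ω → ℝ, Integrable X (P[|B m]) → Integrable X (P.restrict (B m)) :=
      fun X h => (hCondRestr m h2 X).1 h
    have i1 := toR _ (hIntMul m h1 h2 _ hQhm1).2
    have i2 := toR _ (hIntMul m h1 h2 _ hQhm).2
    have i3 := toR _ (hIntMul m h1 h2 _ hQbm).2
    have i4 := toR _ (hIntMul m h1 h2 _ hQhm1).1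
    have i5 := toR _ (hIntMul m h1 h2 _ hQhm).1
    have i6 := toR _ (hIntMul m h1 h2 _ hQbm).1
    have hD : ∫ ω in B m, (ghat m ω)⁻¹ * (Qhat (m + 1) ω - Qhat m ω) ∂P
        = (∫ ω in B m, (ghat m ω)⁻¹ * Qhat (m + 1) ω ∂P)
          - ∫ ω in B m, (ghat m ω)⁻¹ * Qhat m ω ∂P := by
      rw [← integral_sub i1 i2]
      exact integral_congr_ae (Filter.Eventually.of_forall fun ω => by ring)
    have hR : ∫ ω in B m, ((ghat m ω)⁻¹ - (g m ω)⁻¹) * (Qbar m ω - Qhat m ω) ∂P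
        = ((∫ ω in B m, (ghat m ω)⁻¹ * Qbar m ω ∂P)
            - ∫ ω in B m, (ghat m ω)⁻¹ * Qhat m ω ∂P)
          - ((∫ ω in B m, (g m ω)⁻¹ * Qbar m ω ∂P)
            - ∫ ω in B m, (g m ω)⁻¹ * Qhat m ω ∂P) := by
      have j1 : Integrable (fun ω => (ghat m ω)⁻¹ * Qbar m ω - (ghat m ω)⁻¹ * Qhat m ω)
          (P.restrict (B m)) := i3.sub i2
      have j2 : Integrable (fun ω => (g m ω)⁻¹ * Qbar m ω - (g m ω)⁻¹ * Qhat m ω)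
          (P.restrict (B m)) := i6.sub i5
      rw [← integral_sub i3 i2, ← integral_sub i6 i5, ← integral_sub j1 j2]
      exact integral_congr_ae (Filter.Eventually.of_forall fun ω => by ring)
    have hAm : A m = ∫ ω in B m, (g m ω)⁻¹ * Qhat (m + 1) ω ∂P := by simp only [hAdef]
    rw [hD, hswap1, hR, hAm, hswap2, hAm1, ← hstep.2]
    ring
  -- integrability of indicator terms over P
  have hFint : ∀ m ∈ Finset.Icc 1 k,
      Integrable ((B m).indicator fun ω => (ghat m ω)⁻¹ * (Qhat (m + 1) ω - Qhat m ω)) P := by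
    intro m hm
    obtain ⟨h1, h2⟩ := Finset.mem_Icc.1 hm
    refine Integrable.indicator ?_ (hBmeas m h2)
    have hdom : Integrable (fun ω => (ε ^ m)⁻¹ * (|Qhat (m + 1) ω| + |Qhat m ω|)) P :=
      ((hQhatIntP (m + 1) (by omega) (by omega)).abs.add (hQhatIntP m h1 (by omega)).abs).const_mul _
    refine hdom.mono'
      (((hghatmeas m h1 h2).mono (h𝒲le m h1 h2) le_rfl).inv.aestronglyMeasurable.mul
        ((hQhatIntP (m + 1) (by omega) (by omega)).1.sub (hQhatIntP m h1 (by omega)).1)) ?_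
    filter_upwards [hGae] with ω hω
    have h := hω.1 m h2
    rw [Real.norm_eq_abs, abs_mul, abs_inv, abs_of_pos h.2.2.1]
    refine mul_le_mul h.2.2.2 ?_ (abs_nonneg _) (by positivity)
    calc |Qhat (m + 1) ω - Qhat m ω| = |Qhat (m + 1) ω + -(Qhat m ω)| := by rw [sub_eq_add_neg]
      _ ≤ |Qhat (m + 1) ω| + |-(Qhat m ω)| := abs_add_le _ _
      _ = |Qhat (m + 1) ω| + |Qhat m ω| := by rw [abs_neg]
  -- split the big integral
  have hsplit : ∫ ω, ((∑ m ∈ Finset.Icc 1 k,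
        (B m).indicator (fun ω' => (ghat m ω')⁻¹ * (Qhat (m + 1) ω' - Qhat m ω')) ω)
        + Qhat 1 ω) ∂P
      = (∑ m ∈ Finset.Icc 1 k,
          ∫ ω in B m, (ghat m ω)⁻¹ * (Qhat (m + 1) ω - Qhat m ω) ∂P)
        + ∫ ω, Qhat 1 ω ∂P := by
    rw [integral_add (integrable_finset_sum _ hFint) (hQhatIntP 1 le_rfl (by omega)),
      integral_finset_sum _ hFint]
    congr 1
    refine Finset.sum_congr rfl fun m hm => ?_
    obtain ⟨h1, h2⟩ := Finset.mem_Icc.1 hm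
    exact integral_indicator (hBmeas m h2)
  -- reindex sums to range
  have hreindex : ∀ F : ℕ → ℝ, ∑ m ∈ Finset.Icc 1 k, F m = ∑ j ∈ Finset.range k, F (j + 1) := by
    intro F
    rw [← Finset.Ico_add_one_right_eq_Icc, Finset.sum_Ico_eq_sum_range]
    exact Finset.sum_congr rfl fun j _ => by rw [add_comm]
  have htel : ∑ j ∈ Finset.range k, (A (j + 1) - A j) = A k - A 0 := Finset.sum_range_sub A k
  have hDsum : ∑ j ∈ Finset.range k,
        ∫ ω in B (j + 1), (ghat (j + 1) ω)⁻¹ * (Qhat (j + 2) ω - Qhat (j + 1) ω) ∂P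
      = (∑ j ∈ Finset.range k,
          ∫ ω in B (j + 1), ((ghat (j + 1) ω)⁻¹ - (g (j + 1) ω)⁻¹)
            * (Qbar (j + 1) ω - Qhat (j + 1) ω) ∂P)
        + (A k - A 0) := by
    rw [← htel, ← Finset.sum_add_distrib]
    refine Finset.sum_congr rfl fun j hj => ?_
    have hj' := Finset.mem_range.1 hj
    have hd := hDeq (j + 1) (by omega) (by omega)
    rw [show j + 1 - 1 = j from by omega] at hd
    exact hd
  rw [hsplit, hQ1V, hreindex, hreindex
    (fun m => ∫ ω in B m, ((ghat m ω)⁻¹ - (g m ω)⁻¹) * (Qbar m ω - Qhat m ω) ∂P), hDsum,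
    hAk, hA0]
  ring
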